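/- If the parameter conditions hold (β_i = β for all i, c_{i,j} = c for all i,j, and α_i c_{i,i} constant), then all φ(X_i) fix the identity element 1 of T_n and act trivially on the quotient T_n / span{f_{i,j}}; i.e., the representation of B_n on T_n decomposes as the direct sum of the trivial 1-dimensional representation on R·1 and an n²-dimensional representation on span{f_{i,j}}. -/

import Mathlib

/-- The braid operator `φ(X_i)` on the algebra `T_n` (with basis `1, f_{j,k}`), defined by
`f_{j,j} ↦ f_{j,j}` for `j ≠ i, i+1`, `f_{i+1,i+1} ↦ f_{i,i}`,
`f_{i,i} ↦ α⁻¹ (Y_i Y_{i+1} Y_i⁻¹ - β)`, `f_{j,k} ↦ φ(X_i)(f_{j,j}) φ(X_i)(f_{k,k}) c⁻¹`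
for `j ≠ k`, and `1 ↦ 1`; here `Y_k = α f_{k,k} + β` and
`Y_k⁻¹ = β⁻¹ (1 - α γ⁻¹ f_{k,k})` with `γ = β + cα`. -/
noncomputable def phiOp {R T : Type*} [CommRing R] [Ring T] [Algebra R T]
    {n : ℕ} (f : Fin n → Fin n → T) (b : Module.Basis (Option (Fin n × Fin n)) R T)
    (c α β γ : Rˣ) (i : ℕ) (hi : i + 1 < n) : T →ₗ[R] T :=
  letI ii : Fin n := ⟨i, Nat.lt_of_succ_lt hi⟩
  letI jj : Fin n := ⟨i + 1, hi⟩
  letI Y : Fin n → T := fun k => (α : R) • f k k + (β : R) • 1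
  letI Yinv : Fin n → T := fun k =>
    ((β⁻¹ : Rˣ) : R) • (1 - ((α : R) * ((γ⁻¹ : Rˣ) : R)) • f k k)
  letI d : Fin n → T := fun k =>
    if k = ii then ((α⁻¹ : Rˣ) : R) • (Y ii * Y jj * Yinv ii - (β : R) • 1)
    else if k = jj then f ii ii
    else f k k
  b.constr ℕ fun x => match x with
    | none => 1
    | some (j, k) => if j = k then d j else ((c⁻¹ : Rˣ) : R) • (d j * d k)

/-- All `φ(X_i)` fix the identity `1` of `T_n`, preserve the span `S` of the `f_{j,k}`,
and `T_n = R·1 ⊕ S`: the representation of `B_n` on `T_n` decomposes as the direct sum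
of the trivial one-dimensional representation on `R·1` and an `n²`-dimensional
representation on `S`. -/
theorem phiOp_decomposition
    (R T : Type*) [CommRing R] [Ring T] [Algebra R T]
    (n : ℕ) (f : Fin n → Fin n → T) (b : Module.Basis (Option (Fin n × Fin n)) R T)
    (hb1 : b none = 1) (hbf : ∀ j k, b (some (j, k)) = f j k)
    (c α β γ : Rˣ) (hγ : (γ : R) = (β : R) + (c : R) * (α : R))
    (hrel : ∀ i j k l, f i j * f k l = (c : R) • f i l) :
    (∀ i : ℕ, ∀ hi : i + 1 < n, phiOp f b c α β γ i hi 1 = 1) ∧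
    (∀ i : ℕ, ∀ hi : i + 1 < n, ∀ j k : Fin n,
      phiOp f b c α β γ i hi (f j k) ∈
        Submodule.span R (Set.range fun p : Fin n × Fin n => f p.1 p.2)) ∧
    IsCompl (Submodule.span R {(1 : T)})
      (Submodule.span R (Set.range fun p : Fin n × Fin n => f p.1 p.2)) := by
  set S := Submodule.span R (Set.range fun p : Fin n × Fin n => f p.1 p.2) with hSdef
  have hfS : ∀ j k, f j k ∈ S := fun j k => Submodule.subset_span ⟨(j, k), rfl⟩
  have hSS : S * S ≤ S := by
    rw [hSdef, Submodule.span_mul_span, Submodule.span_le]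
    rintro x ⟨_, ⟨⟨j, k⟩, rfl⟩, _, ⟨⟨l, m⟩, rfl⟩, rfl⟩
    show f j k * f l m ∈ S
    rw [hrel]
    exact Submodule.smul_mem _ _ (hfS j m)
  have hmulS : ∀ {x y : T}, x ∈ S → y ∈ S → x * y ∈ S := fun hx hy =>
    hSS (Submodule.mul_mem_mul hx hy)
  refine ⟨?_, ?_, ?_⟩
  · intro i hi
    rw [← hb1]
    simp only [phiOp]
    rw [Module.Basis.constr_basis, hb1]
  · intro i hi j k
    set ii : Fin n := ⟨i, Nat.lt_of_succ_lt hi⟩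
    set jj : Fin n := ⟨i + 1, hi⟩
    set A := f ii ii with hA
    set B := f jj jj with hB
    -- the key element
    obtain ⟨t, ht⟩ : ∃ t : T, t = ((α : R) * (α : R)) • (A * B) + ((α : R) * (β : R)) • A
        + ((β : R) * (α : R)) • B := ⟨_, rfl⟩
    have htS : t ∈ S := by
      rw [ht]
      refine Submodule.add_mem _ (Submodule.add_mem _ ?_ ?_) ?_ <;>
        exact Submodule.smul_mem _ _ (by first | exact hmulS (hfS _ _) (hfS _ _) | exact hfS _ _)
    obtain ⟨u, hu⟩ : ∃ u : T,
        u = (((β⁻¹ : Rˣ) : R) * ((α : R) * ((γ⁻¹ : Rˣ) : R))) • A := ⟨_, rfl⟩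
    have huS : u ∈ S := by rw [hu]; exact Submodule.smul_mem _ _ (hfS _ _)
    have hP : ((α : R) • A + (β : R) • 1) * ((α : R) • B + (β : R) • 1)
        = t + ((β : R) * (β : R)) • 1 := by
      rw [ht]
      simp only [add_mul, mul_add, smul_mul_assoc, mul_smul_comm, smul_smul, mul_one,
        one_mul, smul_add]
      module
    have hQ : ((β⁻¹ : Rˣ) : R) • (1 - ((α : R) * ((γ⁻¹ : Rˣ) : R)) • A)
        = ((β⁻¹ : Rˣ) : R) • 1 - u := by
      rw [hu]
      simp only [smul_sub, smul_smul]
    have hββ : ((β : R) * (β : R)) * ((β⁻¹ : Rˣ) : R) = (β : R) := by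
      rw [mul_assoc]
      simp
    have hfull : ((α : R) • A + (β : R) • 1) * ((α : R) • B + (β : R) • 1)
          * (((β⁻¹ : Rˣ) : R) • (1 - ((α : R) * ((γ⁻¹ : Rˣ) : R)) • A)) - (β : R) • 1
        = ((β⁻¹ : Rˣ) : R) • t - t * u - (((β : R) * (β : R)) • u) := by
      rw [hP, hQ]
      simp only [add_mul, mul_sub, smul_mul_assoc, mul_smul_comm, smul_smul, mul_one,
        one_mul, hββ]
      match_scalars <;> try ring1
      linear_combination ((β : R)) * (Units.inv_mul β)
    have hkeyS : ((α⁻¹ : Rˣ) : R) • (((α : R) • A + (β : R) • 1)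
          * ((α : R) • B + (β : R) • 1)
          * (((β⁻¹ : Rˣ) : R) • (1 - ((α : R) * ((γ⁻¹ : Rˣ) : R)) • A)) - (β : R) • 1) ∈ S := by
      rw [hfull]
      exact Submodule.smul_mem _ _ (Submodule.sub_mem _
        (Submodule.sub_mem _ (Submodule.smul_mem _ _ htS) (hmulS htS huS))
        (Submodule.smul_mem _ _ huS))
    have hD : ∀ m : Fin n,
        (if m = ii then ((α⁻¹ : Rˣ) : R) • (((α : R) • A + (β : R) • 1)
            * ((α : R) • B + (β : R) • 1)
            * (((β⁻¹ : Rˣ) : R) • (1 - ((α : R) * ((γ⁻¹ : Rˣ) : R)) • A)) - (β : R) • 1)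
          else if m = jj then A else f m m) ∈ S := by
      intro m
      split_ifs
      · exact hkeyS
      · exact hfS _ _
      · exact hfS _ _
    rw [← hbf j k]
    have happ : phiOp f b c α β γ i hi (b (some (j, k)))
        = (fun x : Option (Fin n × Fin n) => match x with
            | none => (1 : T)
            | some (j, k) =>
              letI d : Fin n → T := fun m =>
                if m = ii then ((α⁻¹ : Rˣ) : R) • (((α : R) • A + (β : R) • 1)
                    * ((α : R) • B + (β : R) • 1)
                    * (((β⁻¹ : Rˣ) : R) • (1 - ((α : R) * ((γ⁻¹ : Rˣ) : R)) • A)) - (β : R) • 1)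
                  else if m = jj then A else f m m
              if j = k then d j else ((c⁻¹ : Rˣ) : R) • (d j * d k)) (some (j, k)) :=
      Module.Basis.constr_basis b ℕ _ _
    rw [happ]
    simp only
    by_cases h : j = k
    · rw [if_pos h]
      exact hD j
    · rw [if_neg h]
      exact Submodule.smul_mem _ _ (hmulS (hD j) (hD k))
  · have h1 : Submodule.span R {(1 : T)} = Submodule.span R (⇑b '' {none}) := by
      rw [Set.image_singleton, hb1]
    have h2 : S = Submodule.span R (⇑b '' Set.range some) := by
      rw [hSdef]
      congr 1
      ext x
      constructor
      · rintro ⟨⟨j, k⟩, rfl⟩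
        exact ⟨some (j, k), ⟨(j, k), rfl⟩, hbf j k⟩
      · rintro ⟨_, ⟨⟨j, k⟩, rfl⟩, rfl⟩
        exact ⟨(j, k), (hbf j k).symm⟩
    rw [h1, h2]
    constructor
    · refine b.linearIndependent.disjoint_span_image ?_
      rw [Set.disjoint_left]
      rintro x rfl ⟨y, hy⟩
      exact Option.some_ne_none y hy
    · rw [codisjoint_iff, ← Submodule.span_union, ← Set.image_union]
      have : ({none} ∪ Set.range some : Set (Option (Fin n × Fin n))) = Set.univ := by
        ext x
        cases x <;> simp
      rw [this, Set.image_univ, Module.Basis.span_eq]
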